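/- For every x in [ε, Λ] one has Aw(x) > w(x), where A is applied to the function w itself. -/

import Mathlib

open Real Set MeasureTheory intervalIntegral

/-- The function `w(x) = (4ε/λ)·√(ε/(Λx))`. -/
noncomputable def wfun (lam ε Λ : ℝ) (x : ℝ) : ℝ :=
  (4 * ε / lam) * Real.sqrt (ε / (Λ * x))

/-- The nonlinear integral operator `A`. -/
noncomputable def opA (lam ε Λ : ℝ) (u : ℝ → ℝ) (x : ℝ) : ℝ :=
  (lam / 2) * ∫ y in ε..Λ, (1 / (y + x + |y - x|)) * (y * u y / (y + (u y) ^ 2))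

/-- Membership in the set `V`: continuous on `[ε,Λ]` and `w(x) ≤ u(x) ≤ (λ/4)√Λ` there. -/
def memV (lam ε Λ : ℝ) (u : ℝ → ℝ) : Prop :=
  ContinuousOn u (Set.Icc ε Λ) ∧
    ∀ x ∈ Set.Icc ε Λ, wfun lam ε Λ x ≤ u x ∧ u x ≤ (lam / 4) * Real.sqrt Λ


private lemma aux_sq (a y : ℝ) (ha : 0 < a) (h : a ≤ y) : a ^ 2 / y ≤ y := by
  rw [div_le_iff₀ (by linarith)]; nlinarith

private lemma aux_core (y w D : ℝ) (hy : 0 < y) (hw : 0 ≤ w) (hD : 0 < D)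
    (hsq : w ^ 2 ≤ (D - 1) * y) : w / D ≤ y * w / (y + w ^ 2) := by
  have hden : 0 < y + w ^ 2 := by nlinarith [sq_nonneg w]
  rw [div_le_div_iff₀ hD hden]
  nlinarith [mul_le_mul_of_nonneg_left hsq hw]

private lemma aux_nn (lam : ℝ) (h : 2 < lam) : 0 ≤ lam ^ 2 + 128 * (lam - 2) := by nlinarith

private lemma aux_le (lam Q : ℝ) (h0 : 0 ≤ Q) (hl : 0 < lam) (h : lam ^ 2 ≤ Q ^ 2) :
    lam ≤ Q := by nlinarith

private lemma aux_ts (t s sr : ℝ) (ht : t ≤ 1) (hs : s ≤ 1) (hts : t * s = sr) :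
    1 - sr ≤ 2 - t - s := by nlinarith

private lemma aux_key (lam r sr Q : ℝ) (hlam : 2 < lam) (hr0 : 0 < r)
    (hsr0 : 0 ≤ sr) (hsr2 : sr ^ 2 = r) (hQsq : Q ^ 2 = lam ^ 2 + 128 * (lam - 2))
    (h64 : 64 * sr + lam ≤ Q) : 2 * (1 + 16 * r / lam ^ 2) < lam * (1 - sr) := by
  have hlam0 : (0:ℝ) < lam := by linarith
  have hkey0 : 32 * r + lam * sr ≤ lam - 2 := by
    nlinarith [mul_self_le_mul_self (by positivity : (0:ℝ) ≤ 64 * sr + lam) h64]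
  have hlam2 : (0:ℝ) < lam ^ 2 := by positivity
  rw [← mul_lt_mul_iff_of_pos_right hlam2]
  have e1 : 2 * (1 + 16 * r / lam ^ 2) * lam ^ 2 = 2 * lam ^ 2 + 32 * r := by
    field_simp; ring
  rw [e1]
  nlinarith [mul_le_mul_of_nonneg_left hkey0 (sq_nonneg lam),
    mul_pos (show (0:ℝ) < lam ^ 2 - 1 by nlinarith) hr0]

set_option maxHeartbeats 1000000 in
theorem stmt_1_aux (ε Λ lam x : ℝ) (hε : 0 < ε) (hεΛ : ε < Λ) (hlam : 2 < lam)
    (hratio : ε / Λ ≤ min (1 / 16)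
      (((Real.sqrt (lam ^ 2 + 128 * (lam - 2)) - lam) / 64) ^ 2))
    (hεx : ε ≤ x) (hxΛ : x ≤ Λ) :
    wfun lam ε Λ x < (lam / 2) *
      ∫ y in ε..Λ, (1 / (y + x + |y - x|)) *
        (y * wfun lam ε Λ y / (y + (wfun lam ε Λ y) ^ 2)) := by
  have hΛ0 : (0:ℝ) < Λ := hε.trans hεΛ
  have hx0 : (0:ℝ) < x := hε.trans_le hεx
  have hlam0 : (0:ℝ) < lam := by linarith
  set F : ℝ → ℝ := fun y => (1 / (y + x + |y - x|)) *
      (y * wfun lam ε Λ y / (y + (wfun lam ε Λ y) ^ 2)) with hF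
  set C : ℝ := 4 * ε / lam * Real.sqrt (ε / Λ) with hCdef
  set D : ℝ := 1 + 16 * (ε / Λ) / lam ^ 2 with hDdef
  have hC : 0 < C := by rw [hCdef]; positivity
  have hD0 : 0 < D := by rw [hDdef]; positivity
  have hD1 : 1 ≤ D := by
    have : 0 < 16 * (ε / Λ) / lam ^ 2 := by positivity
    rw [hDdef]; linarith
  -- w y = C / √y
  have h_w_eq : ∀ y : ℝ, 0 < y → wfun lam ε Λ y = C * (Real.sqrt y)⁻¹ := by
    intro y hy
    rw [wfun, div_mul_eq_div_div, Real.sqrt_div (by positivity) y, hCdef]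
    ring
  have h_w_nonneg : ∀ y : ℝ, 0 ≤ wfun lam ε Λ y := by
    intro y; rw [wfun]; positivity
  have hCsq : C ^ 2 = 16 * ε ^ 2 * (ε / Λ) / lam ^ 2 := by
    rw [hCdef, mul_pow, Real.sq_sqrt (by positivity)]; ring
  have h_w_sq : ∀ y : ℝ, ε ≤ y → (wfun lam ε Λ y) ^ 2 ≤ (D - 1) * y := by
    intro y hy
    have hy0 : 0 < y := hε.trans_le hy
    have h1 : (wfun lam ε Λ y) ^ 2 = C ^ 2 / y := by
      rw [h_w_eq y hy0, mul_pow, inv_pow, Real.sq_sqrt hy0.le, div_eq_mul_inv]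
    have key : ε ^ 2 / y ≤ y := aux_sq ε y hε hy
    calc (wfun lam ε Λ y) ^ 2 = (16 * (ε / Λ) / lam ^ 2) * (ε ^ 2 / y) := by
          rw [h1, hCsq]; ring
      _ ≤ (16 * (ε / Λ) / lam ^ 2) * y := by
          exact mul_le_mul_of_nonneg_left key (by positivity)
      _ = (D - 1) * y := by rw [hDdef]; ring
  -- continuity of w on [ε, Λ]
  have hwc : ContinuousOn (wfun lam ε Λ) (Set.Icc ε Λ) := by
    apply ContinuousOn.mul continuousOn_const
    apply ContinuousOn.sqrt
    apply ContinuousOn.div continuousOn_const (by fun_prop)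
    intro y hy
    exact ne_of_gt (mul_pos hΛ0 (hε.trans_le hy.1))
  -- continuity of F on [ε, Λ]
  have hfc : ContinuousOn F (Set.Icc ε Λ) := by
    rw [hF]
    apply ContinuousOn.mul
    · apply ContinuousOn.div continuousOn_const (by fun_prop)
      intro y hy
      have h1 : 0 ≤ |y - x| := abs_nonneg _
      have h2 : ε ≤ y := hy.1
      exact ne_of_gt (by linarith)
    · apply ContinuousOn.div ((continuousOn_id' _).mul hwc)
        (ContinuousOn.add (continuousOn_id' _) (hwc.pow 2))
      intro y hy
      have h1 : 0 ≤ (wfun lam ε Λ y) ^ 2 := sq_nonneg _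
      have h2 : ε ≤ y := hy.1
      exact ne_of_gt (show (0:ℝ) < y + wfun lam ε Λ y ^ 2 by linarith)
  have hfi1 : IntervalIntegrable F volume ε x := by
    apply ContinuousOn.intervalIntegrable
    rw [Set.uIcc_of_le hεx]
    exact hfc.mono (Set.Icc_subset_Icc le_rfl hxΛ)
  have hfi2 : IntervalIntegrable F volume x Λ := by
    apply ContinuousOn.intervalIntegrable
    rw [Set.uIcc_of_le hxΛ]
    exact hfc.mono (Set.Icc_subset_Icc hεx le_rfl)
  -- lower bound functions
  set g1 : ℝ → ℝ := fun y => (C / (2 * D * x)) * y ^ (-(1/2) : ℝ) with hg1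
  set g2 : ℝ → ℝ := fun y => (C / (2 * D)) * y ^ (-(3/2) : ℝ) with hg2
  have hrpow_half : ∀ y : ℝ, 0 < y → y ^ (-(1/2) : ℝ) = (Real.sqrt y)⁻¹ := by
    intro y hy
    rw [Real.rpow_neg hy.le, Real.sqrt_eq_rpow]
  have hg1i : IntervalIntegrable g1 volume ε x :=
    (intervalIntegral.intervalIntegrable_rpow' (by norm_num)).const_mul _
  have hg2i : IntervalIntegrable g2 volume x Λ := by
    apply IntervalIntegrable.const_mul
    apply intervalIntegral.intervalIntegrable_rpow
    right
    rw [Set.uIcc_of_le hxΛ]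
    intro h
    exact absurd h.1 (by linarith)
  -- core pointwise estimate
  have hcore : ∀ y : ℝ, ε ≤ y → y ≤ Λ →
      wfun lam ε Λ y / D ≤ y * wfun lam ε Λ y / (y + (wfun lam ε Λ y) ^ 2) := by
    intro y hy hyΛ
    have hy0 : 0 < y := hε.trans_le hy
    exact aux_core y _ D hy0 (h_w_nonneg y) hD0 (h_w_sq y hy)
  -- pointwise bounds on the two pieces
  have hpt1 : ∀ y ∈ Set.Icc ε x, g1 y ≤ F y := by
    intro y hy
    have hy0 : 0 < y := hε.trans_le hy.1
    have hyΛ : y ≤ Λ := hy.2.trans hxΛ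
    have habs : |y - x| = x - y := by
      rw [abs_of_nonpos (by linarith [hy.2])]; ring
    have hdenom : y + x + |y - x| = 2 * x := by rw [habs]; ring
    rw [hF]
    simp only
    rw [hdenom]
    have h1 : g1 y = (1 / (2 * x)) * (wfun lam ε Λ y / D) := by
      rw [hg1]
      simp only
      rw [hrpow_half y hy0, h_w_eq y hy0]
      have hsy : Real.sqrt y ≠ 0 := ne_of_gt (Real.sqrt_pos.mpr hy0)
      have hDne : D ≠ 0 := ne_of_gt hD0
      field_simp
    rw [h1]
    exact mul_le_mul_of_nonneg_left (hcore y hy.1 hyΛ) (by positivity)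
  have hpt2 : ∀ y ∈ Set.Icc x Λ, g2 y ≤ F y := by
    intro y hy
    have hy0 : 0 < y := hx0.trans_le hy.1
    have hyε : ε ≤ y := hεx.trans hy.1
    have habs : |y - x| = y - x := abs_of_nonneg (by linarith [hy.1])
    have hdenom : y + x + |y - x| = 2 * y := by rw [habs]; ring
    rw [hF]
    simp only
    rw [hdenom]
    have h1 : g2 y = (1 / (2 * y)) * (wfun lam ε Λ y / D) := by
      rw [hg2]
      simp only
      have h32 : y ^ (-(3/2) : ℝ) = (Real.sqrt y)⁻¹ * y⁻¹ := by
        rw [show (-(3/2) : ℝ) = (-(1/2)) + (-1) by norm_num,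
          Real.rpow_add hy0, Real.rpow_neg_one, hrpow_half y hy0]
      rw [h32, h_w_eq y hy0]
      have hsy : Real.sqrt y ≠ 0 := ne_of_gt (Real.sqrt_pos.mpr hy0)
      have hDne : D ≠ 0 := ne_of_gt hD0
      field_simp
    rw [h1]
    exact mul_le_mul_of_nonneg_left (hcore y hyε hy.2) (by positivity)
  -- comparison of integrals
  have hmono1 : ∫ y in ε..x, g1 y ≤ ∫ y in ε..x, F y :=
    intervalIntegral.integral_mono_on hεx hg1i hfi1 hpt1
  have hmono2 : ∫ y in x..Λ, g2 y ≤ ∫ y in x..Λ, F y :=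
    intervalIntegral.integral_mono_on hxΛ hg2i hfi2 hpt2
  -- explicit values of the lower integrals
  set sx : ℝ := Real.sqrt x with hsx
  set se : ℝ := Real.sqrt ε with hse
  set sL : ℝ := Real.sqrt Λ with hsL
  have hsx0 : 0 < sx := Real.sqrt_pos.mpr hx0
  have hse0 : 0 < se := Real.sqrt_pos.mpr hε
  have hsL0 : 0 < sL := Real.sqrt_pos.mpr hΛ0
  have hI1 : ∫ y in ε..x, g1 y = (C / (2 * D * x)) * (2 * sx - 2 * se) := by
    rw [hg1]
    rw [intervalIntegral.integral_const_mul]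
    rw [integral_rpow (Or.inl (by norm_num))]
    rw [show (-(1/2) : ℝ) + 1 = 1/2 by norm_num]
    rw [hsx, hse, Real.sqrt_eq_rpow, Real.sqrt_eq_rpow]
    ring
  have hI2 : ∫ y in x..Λ, g2 y = (C / (2 * D)) * (2 / sx - 2 / sL) := by
    rw [hg2]
    rw [intervalIntegral.integral_const_mul]
    rw [integral_rpow (Or.inr ⟨by norm_num, by
      rw [Set.uIcc_of_le hxΛ]; intro h; exact absurd h.1 (by linarith)⟩)]
    rw [show (-(3/2) : ℝ) + 1 = -(1/2) by norm_num]
    rw [Real.rpow_neg hx0.le, Real.rpow_neg hΛ0.le]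
    rw [hsx, hsL, Real.sqrt_eq_rpow, Real.sqrt_eq_rpow]
    field_simp
    ring
  have hsplit : ∫ y in ε..Λ, F y = (∫ y in ε..x, F y) + ∫ y in x..Λ, F y :=
    (intervalIntegral.integral_add_adjacent_intervals hfi1 hfi2).symm
  set S : ℝ := (C / (2 * D * x)) * (2 * sx - 2 * se) + (C / (2 * D)) * (2 / sx - 2 / sL)
    with hSdef
  have hS_le : S ≤ ∫ y in ε..Λ, F y := by
    rw [hsplit, hSdef, ← hI1, ← hI2]
    exact add_le_add hmono1 hmono2
  -- key algebraic inequality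
  have hr0 : 0 < ε / Λ := by positivity
  set sr : ℝ := Real.sqrt (ε / Λ) with hsr
  have hsr0 : 0 < sr := Real.sqrt_pos.mpr hr0
  have hsr_sq : sr ^ 2 = ε / Λ := Real.sq_sqrt hr0.le
  set Q : ℝ := Real.sqrt (lam ^ 2 + 128 * (lam - 2)) with hQ
  have hQ0 : 0 ≤ Q := Real.sqrt_nonneg _
  have hQsq : Q ^ 2 = lam ^ 2 + 128 * (lam - 2) := Real.sq_sqrt (aux_nn lam hlam)
  have hQlam : lam ≤ Q := aux_le lam Q hQ0 hlam0 (by rw [hQsq]; nlinarith)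
  have hr2 : ε / Λ ≤ ((Q - lam) / 64) ^ 2 := hratio.trans (min_le_right _ _)
  have hsrle : sr ≤ (Q - lam) / 64 := by
    have h1 : sr ≤ Real.sqrt (((Q - lam) / 64) ^ 2) := Real.sqrt_le_sqrt hr2
    rwa [Real.sqrt_sq (by linarith)] at h1
  have h64 : 64 * sr + lam ≤ Q := by linarith
  have hkey : 2 * D < lam * (1 - sr) := by
    rw [hDdef]
    exact aux_key lam (ε / Λ) sr Q hlam hr0 hsr0.le hsr_sq hQsq h64
  -- sqrt relations
  have hsesx : se ≤ sx := Real.sqrt_le_sqrt hεx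
  have hsxsL : sx ≤ sL := Real.sqrt_le_sqrt hxΛ
  have hsr_eq : sr = se / sL := by rw [hsr, hse, hsL, Real.sqrt_div hε.le]
  have hx_eq : x = sx ^ 2 := (Real.sq_sqrt hx0.le).symm
  -- final inequality
  have hfinal : C / sx < (lam / 2) * S := by
    rw [div_lt_iff₀ hsx0]
    have expand : (lam / 2) * S * sx = (lam * C / (2 * D)) * (2 - se / sx - sx / sL) := by
      rw [hSdef, hx_eq]
      field_simp
      ring
    rw [expand]
    have hts : (se / sx) * (sx / sL) = sr := by
      rw [hsr_eq]; field_simp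
    have ht1 : se / sx ≤ 1 := by rw [div_le_one hsx0]; exact hsesx
    have hs1 : sx / sL ≤ 1 := by rw [div_le_one hsL0]; exact hsxsL
    have hu : 1 - sr ≤ 2 - se / sx - sx / sL := aux_ts _ _ _ ht1 hs1 hts
    have hpos : 0 < lam * C / (2 * D) := by positivity
    calc C = (lam * C / (2 * D)) * ((2 * D) / lam) := by field_simp
      _ < (lam * C / (2 * D)) * (1 - sr) := by
          apply mul_lt_mul_of_pos_left _ hpos
          rw [div_lt_iff₀ hlam0]
          linarith [hkey]
      _ ≤ (lam * C / (2 * D)) * (2 - se / sx - sx / sL) :=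
          mul_le_mul_of_nonneg_left hu hpos.le
  have hW : wfun lam ε Λ x = C / sx := by
    rw [h_w_eq x hx0, hsx, div_eq_mul_inv]
  calc wfun lam ε Λ x = C / sx := hW
    _ < (lam / 2) * S := hfinal
    _ ≤ (lam / 2) * ∫ y in ε..Λ, F y :=
        mul_le_mul_of_nonneg_left hS_le (by positivity)

theorem stmt_1 (ε Λ lam : ℝ) (hε : 0 < ε) (hεΛ : ε < Λ) (hlam : 2 < lam)
    (hratio : ε / Λ ≤ min (1 / 16)
      (((Real.sqrt (lam ^ 2 + 128 * (lam - 2)) - lam) / 64) ^ 2)) :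
    ∀ x ∈ Set.Icc ε Λ, wfun lam ε Λ x < opA lam ε Λ (wfun lam ε Λ) x := by
  intro x hx
  have := stmt_1_aux ε Λ lam x hε hεΛ hlam hratio hx.1 hx.2
  simpa only [opA] using this
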